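/- Fix r > 0, η > 0, ϑ > 0. For each x ∈ ℝ, the function θ ↦ (1/2) x²/θ − η log(θ/ϑ) + (θ/ϑ)^r on (0, ∞) attains its minimum at some θ* satisfying θ* ≥ ϑ (η/r)^{1/r}, with equality when x = 0. -/

import Mathlib

open Real Filter Set

theorem stmt_8 (r η ϑ x : ℝ) (hr : 0 < r) (hη : 0 < η) (hϑ : 0 < ϑ) :
    let P : ℝ → ℝ := fun θ => (1/2) * x ^ 2 / θ - η * Real.log (θ / ϑ) + (θ / ϑ) ^ r
    ∃ θs : ℝ, 0 < θs ∧ (∀ θ : ℝ, 0 < θ → P θs ≤ P θ) ∧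
      ϑ * (η / r) ^ (1 / r) ≤ θs ∧
      (x = 0 → θs = ϑ * (η / r) ^ (1 / r)) := by
  intro P
  set a : ℝ := (1/2) * x ^ 2 with ha_def
  have ha : 0 ≤ a := by positivity
  set u₀ : ℝ := (η / r) ^ (1 / r) with hu0_def
  have hu0 : 0 < u₀ := Real.rpow_pos_of_pos (by positivity) _
  set θ₀ : ℝ := ϑ * u₀ with hθ0_def
  have hθ0 : 0 < θ₀ := by positivity
  have hu0r : u₀ ^ r = η / r := by
    rw [hu0_def, one_div, Real.rpow_inv_rpow (by positivity) hr.ne']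
  have hP : ∀ θ : ℝ, P θ = a / θ - η * Real.log (θ / ϑ) + (θ / ϑ) ^ r := fun θ => rfl
  -- derivative
  have hderiv : ∀ θ : ℝ, 0 < θ →
      HasDerivAt P ((r * (θ / ϑ) ^ r - η) / θ - a / θ ^ 2) θ := by
    intro θ hθ
    have hθϑ : (0:ℝ) < θ / ϑ := by positivity
    have h1 : HasDerivAt (fun θ : ℝ => a / θ) (a * -(θ ^ 2)⁻¹) θ := by
      simpa [div_eq_mul_inv] using (hasDerivAt_inv hθ.ne').const_mul a
    have h2 : HasDerivAt (fun θ : ℝ => Real.log (θ / ϑ)) ((θ / ϑ)⁻¹ * (1 / ϑ)) θ :=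
      by have := (Real.hasDerivAt_log hθϑ.ne').comp θ ((hasDerivAt_id θ).div_const ϑ); exact this
    have h3 : HasDerivAt (fun θ : ℝ => (θ / ϑ) ^ r) (r * (θ / ϑ) ^ (r - 1) * (1 / ϑ)) θ :=
      (Real.hasDerivAt_rpow_const (p := r) (Or.inl hθϑ.ne')).comp θ (h := fun t => id t / ϑ)
        ((hasDerivAt_id θ).div_const ϑ)
    have := (h1.sub (h2.const_mul η)).add h3
    refine this.congr_deriv ?_
    rw [Real.rpow_sub_one hθϑ.ne']
    field_simp
    ring
  -- continuity
  have hcont : ContinuousOn P (Set.Ioi (0:ℝ)) := by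
    intro θ hθ
    have hθ : (0:ℝ) < θ := hθ
    have hθϑ : (0:ℝ) < θ / ϑ := by positivity
    apply ContinuousAt.continuousWithinAt
    have c1 : ContinuousAt (fun θ : ℝ => a / θ) θ :=
      continuousAt_const.div continuousAt_id hθ.ne'
    have cdiv : ContinuousAt (fun θ : ℝ => θ / ϑ) θ := continuousAt_id.div_const ϑ
    have c2 : ContinuousAt (fun θ : ℝ => Real.log (θ / ϑ)) θ := cdiv.log hθϑ.ne'
    have c3 : ContinuousAt (fun θ : ℝ => (θ / ϑ) ^ r) θ := cdiv.rpow_const (Or.inl hθϑ.ne')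
    exact (c1.sub (c2.const_mul η)).add c3
  -- antitone up to θ₀
  have hanti : ∀ θ : ℝ, 0 < θ → θ ≤ θ₀ → P θ₀ ≤ P θ := by
    intro θ hθ hθle
    have hsub : Set.Icc θ θ₀ ⊆ Set.Ioi 0 := fun y hy => lt_of_lt_of_le hθ hy.1
    have key : AntitoneOn P (Set.Icc θ θ₀) := by
      apply antitoneOn_of_deriv_nonpos (convex_Icc _ _) (hcont.mono hsub)
      · intro y hy
        rw [interior_Icc] at hy
        exact (hderiv y (hθ.trans hy.1)).differentiableAt.differentiableWithinAt
      · intro y hy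
        rw [interior_Icc] at hy
        have hy0 : 0 < y := hθ.trans hy.1
        rw [(hderiv y hy0).deriv]
        have hyu : y / ϑ ≤ u₀ := by
          rw [div_le_iff₀ hϑ]
          calc y ≤ θ₀ := hy.2.le
            _ = u₀ * ϑ := by rw [hθ0_def]; ring
        have h1 : (y / ϑ) ^ r ≤ η / r := by
          calc (y / ϑ) ^ r ≤ u₀ ^ r := Real.rpow_le_rpow (by positivity) hyu hr.le
            _ = η / r := hu0r
        have h2 : r * (y / ϑ) ^ r - η ≤ 0 := by
          have := mul_le_mul_of_nonneg_left h1 hr.le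
          rw [mul_div_cancel₀ _ hr.ne'] at this
          linarith
        have h3 : (r * (y / ϑ) ^ r - η) / y ≤ 0 :=
          div_nonpos_of_nonpos_of_nonneg h2 hy0.le
        have h4 : 0 ≤ a / y ^ 2 := by positivity
        linarith
    exact key ⟨le_refl θ, hθle⟩ ⟨hθle, le_refl θ₀⟩ hθle
  by_cases hx : x = 0
  · -- minimizer is exactly θ₀
    subst hx
    have ha0 : a = 0 := by rw [ha_def]; ring
    refine ⟨θ₀, hθ0, ?_, le_refl _, fun _ => rfl⟩
    intro θ hθ
    rcases le_or_gt θ θ₀ with h | h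
    · exact hanti θ hθ h
    · have hsub : Set.Icc θ₀ θ ⊆ Set.Ioi 0 := fun y hy => lt_of_lt_of_le hθ0 hy.1
      have key : MonotoneOn P (Set.Icc θ₀ θ) := by
        apply monotoneOn_of_deriv_nonneg (convex_Icc _ _) (hcont.mono hsub)
        · intro y hy
          rw [interior_Icc] at hy
          exact (hderiv y (hθ0.trans hy.1)).differentiableAt.differentiableWithinAt
        · intro y hy
          rw [interior_Icc] at hy
          have hy0 : 0 < y := hθ0.trans hy.1
          rw [(hderiv y hy0).deriv, ha0]
          have hyu : u₀ ≤ y / ϑ := by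
            rw [le_div_iff₀ hϑ]
            calc u₀ * ϑ = θ₀ := by rw [hθ0_def]; ring
              _ ≤ y := hy.1.le
          have h1 : η / r ≤ (y / ϑ) ^ r := by
            calc η / r = u₀ ^ r := hu0r.symm
              _ ≤ (y / ϑ) ^ r := Real.rpow_le_rpow hu0.le hyu hr.le
          have h2 : 0 ≤ r * (y / ϑ) ^ r - η := by
            have := mul_le_mul_of_nonneg_left h1 hr.le
            rw [mul_div_cancel₀ _ hr.ne'] at this
            linarith
          have h3 : 0 ≤ (r * (y / ϑ) ^ r - η) / y := div_nonneg h2 hy0.le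
          have : (0:ℝ) / y ^ 2 = 0 := zero_div _
          rw [this]
          linarith
      exact key ⟨le_refl θ₀, h.le⟩ ⟨h.le, le_refl θ⟩ h.le
  · -- tendsto atTop
    have htop : Tendsto P atTop atTop := by
      have hlog := (isLittleO_log_rpow_atTop hr).const_mul_left η
      have hbound : ∀ᶠ u in atTop, η * Real.log u ≤ (1/2) * u ^ r := by
        filter_upwards [hlog.bound (by norm_num : (0:ℝ) < 1/2),
          eventually_ge_atTop (1:ℝ)] with u hu hu1
        have h0u : (0:ℝ) ≤ u := by linarith
        have habs : |η * Real.log u| ≤ 1/2 * |u ^ r| := by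
          simpa [Real.norm_eq_abs, abs_mul] using hu
        calc η * Real.log u ≤ |η * Real.log u| := le_abs_self _
          _ ≤ 1/2 * |u ^ r| := habs
          _ = 1/2 * u ^ r := by rw [abs_of_nonneg (Real.rpow_nonneg h0u r)]
      have h2 : Tendsto (fun u : ℝ => (1/2) * u ^ r) atTop atTop :=
        (tendsto_rpow_atTop hr).const_mul_atTop (by norm_num)
      have h3 : Tendsto (fun u : ℝ => u ^ r - η * Real.log u) atTop atTop := by
        refine tendsto_atTop_mono' atTop ?_ h2
        filter_upwards [hbound] with u hu
        linarith
      have hdivt : Tendsto (fun θ : ℝ => θ / ϑ) atTop atTop :=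
        tendsto_id.atTop_div_const hϑ
      have h4 : Tendsto (fun θ : ℝ => (θ / ϑ) ^ r - η * Real.log (θ / ϑ)) atTop atTop :=
        h3.comp hdivt
      refine tendsto_atTop_mono' atTop ?_ h4
      filter_upwards [eventually_gt_atTop (0:ℝ)] with θ hθ
      have h5 : 0 ≤ a / θ := by positivity
      rw [hP θ]
      linarith
    obtain ⟨M, hM⟩ := (htop.eventually (eventually_ge_atTop (P θ₀))).exists_forall_of_atTop
    set M' : ℝ := max M θ₀ with hM'_def
    have hθ0M' : θ₀ ≤ M' := le_max_right _ _
    have hsub : Set.Icc θ₀ M' ⊆ Set.Ioi 0 := fun y hy => lt_of_lt_of_le hθ0 hy.1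
    obtain ⟨θs, hθs_mem, hmin⟩ :=
      isCompact_Icc.exists_isMinOn (nonempty_Icc.mpr hθ0M') (hcont.mono hsub)
    have hθs0 : 0 < θs := lt_of_lt_of_le hθ0 hθs_mem.1
    have hminθ0 : P θs ≤ P θ₀ := hmin ⟨le_refl θ₀, hθ0M'⟩
    refine ⟨θs, hθs0, ?_, hθs_mem.1, fun h => absurd h hx⟩
    intro θ hθ
    rcases le_or_gt θ θ₀ with h | h
    · exact le_trans hminθ0 (hanti θ hθ h)
    · rcases le_or_gt θ M' with h' | h'
      · exact hmin ⟨h.le, h'⟩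
      · have : M ≤ θ := le_trans (le_max_left M θ₀) h'.le
        exact le_trans hminθ0 (hM θ this)
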